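/- Let N ∈ ℕ and c₀,…,c_N, d₀,…,d_N ∈ ℝ, let Λ(θ) = Σ_{l=0}^N [c_l cos(lθ) + d_l sin(lθ)], and fix μ ∈ ℝ with |Λ(μ)| ≠ 1. Then as σ → 0⁺, the variance reduction factor converges to the Fisher information at μ: lim_{σ→0⁺} χ(μ,σ)² / (1 − b(μ,σ)²) = Λ'(μ)² / (1 − Λ(μ)²). (In particular, 1 − b(μ,σ)² ≠ 0 for all sufficiently small σ > 0.) -/

import Mathlib

open MeasureTheory Filter Topology

/-- The Gaussian density with mean μ and standard deviation σ. -/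
noncomputable def gaussDensity (μ σ θ : ℝ) : ℝ :=
  (Real.sqrt (2 * Real.pi) * σ)⁻¹ * Real.exp (-(θ - μ) ^ 2 / (2 * σ ^ 2))

/-- The expected bias `b(μ,σ) = ∫ p(θ;μ,σ) Λ(θ) dθ`. -/
noncomputable def expBias (Λ : ℝ → ℝ) (μ σ : ℝ) : ℝ :=
  ∫ θ : ℝ, gaussDensity μ σ θ * Λ θ

/-- The chi function `χ(μ,σ) = σ⁻² ∫ (θ−μ) p(θ;μ,σ) Λ(θ) dθ`. -/
noncomputable def chiFun (Λ : ℝ → ℝ) (μ σ : ℝ) : ℝ :=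
  (1 / σ ^ 2) * ∫ θ : ℝ, (θ - μ) * gaussDensity μ σ θ * Λ θ

section AuxGauss

lemma aux_exp_eq : (fun x : ℝ => Real.exp (-x ^ 2 / 2)) =
    fun x : ℝ => Real.exp (-(1/2 : ℝ) * x ^ 2) := by
  funext x; congr 1; ring

lemma aux_integrable_exp : Integrable (fun x : ℝ => Real.exp (-x ^ 2 / 2)) := by
  rw [aux_exp_eq]; exact integrable_exp_neg_mul_sq (by norm_num)

lemma aux_integrable_mul : Integrable (fun x : ℝ => x * Real.exp (-x ^ 2 / 2)) := by
  have h : (fun x : ℝ => x * Real.exp (-x ^ 2 / 2)) =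
      fun x : ℝ => x * Real.exp (-(1/2 : ℝ) * x ^ 2) := by
    funext x; congr 2; ring
  rw [h]; exact integrable_mul_exp_neg_mul_sq (by norm_num)

lemma aux_integrable_sq : Integrable (fun x : ℝ => x ^ 2 * Real.exp (-x ^ 2 / 2)) := by
  have h0 := integrable_rpow_mul_exp_neg_mul_sq (b := (1/2 : ℝ)) (by norm_num)
    (s := (2 : ℝ)) (by norm_num)
  have h : (fun x : ℝ => x ^ (2 : ℝ) * Real.exp (-(1/2 : ℝ) * x ^ 2)) =
      fun x : ℝ => x ^ 2 * Real.exp (-x ^ 2 / 2) := by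
    funext x
    rw [show ((2 : ℝ)) = ((2 : ℕ) : ℝ) by norm_num, Real.rpow_natCast]
    congr 2; ring
  rw [← h]; exact h0

lemma aux_integral_exp : ∫ x : ℝ, Real.exp (-x ^ 2 / 2) = Real.sqrt (2 * Real.pi) := by
  rw [aux_exp_eq]
  have := integral_gaussian (1/2 : ℝ)
  rw [this]
  congr 1; ring

lemma aux_integral_odd : ∫ x : ℝ, x * Real.exp (-x ^ 2 / 2) = 0 := by
  have h := MeasureTheory.integral_neg_eq_self
    (fun x : ℝ => x * Real.exp (-x ^ 2 / 2)) volume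
  simp only [neg_sq, neg_mul] at h
  rw [MeasureTheory.integral_neg] at h
  linarith

lemma aux_integral_sq : ∫ x : ℝ, x ^ 2 * Real.exp (-x ^ 2 / 2) = Real.sqrt (2 * Real.pi) := by
  have hu : ∀ x : ℝ, HasDerivAt (fun y : ℝ => y) 1 x := fun x => hasDerivAt_id x
  have hv : ∀ x : ℝ, HasDerivAt (fun y : ℝ => -Real.exp (-y ^ 2 / 2))
      (x * Real.exp (-x ^ 2 / 2)) x := by
    intro x
    have h1 : HasDerivAt (fun y : ℝ => -y ^ 2 / 2) (-x) x := by
      have := ((hasDerivAt_pow 2 x).neg.div_const 2)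
      exact this.congr_deriv (by norm_num; ring)
    have h2 := h1.exp.neg
    exact h2.congr_deriv (by ring)
  have huv' : Integrable ((fun y : ℝ => y) * fun x => x * Real.exp (-x ^ 2 / 2)) := by
    have : ((fun y : ℝ => y) * fun x => x * Real.exp (-x ^ 2 / 2)) =
        fun x : ℝ => x ^ 2 * Real.exp (-x ^ 2 / 2) := by
      funext x; simp [Pi.mul_apply]; ring
    rw [this]; exact aux_integrable_sq
  have hu'v : Integrable ((fun _ : ℝ => (1:ℝ)) * fun y : ℝ => -Real.exp (-y ^ 2 / 2)) := by
    have : ((fun _ : ℝ => (1:ℝ)) * fun y : ℝ => -Real.exp (-y ^ 2 / 2)) =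
        fun x : ℝ => -Real.exp (-x ^ 2 / 2) := by
      funext x; simp [Pi.mul_apply]
    rw [this]; exact aux_integrable_exp.neg
  have huv : Integrable ((fun y : ℝ => y) * fun y : ℝ => -Real.exp (-y ^ 2 / 2)) := by
    have : ((fun y : ℝ => y) * fun y : ℝ => -Real.exp (-y ^ 2 / 2)) =
        fun x : ℝ => -(x * Real.exp (-x ^ 2 / 2)) := by
      funext x; simp [Pi.mul_apply]
    rw [this]; exact aux_integrable_mul.neg
  have h := MeasureTheory.integral_mul_deriv_eq_deriv_mul_of_integrable (fun x _ => hu x) (fun x _ => hv x) huv' hu'v huv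
  have h1 : ∫ x : ℝ, x * (x * Real.exp (-x ^ 2 / 2)) = ∫ x : ℝ, x ^ 2 * Real.exp (-x ^ 2 / 2) := by
    congr 1; funext x; ring
  have h2 : ∫ x : ℝ, (1:ℝ) * -Real.exp (-x ^ 2 / 2) = -∫ x : ℝ, Real.exp (-x ^ 2 / 2) := by
    rw [← MeasureTheory.integral_neg]; congr 1; funext x; ring
  rw [h1, h2] at h
  rw [h, aux_integral_exp]; ring

end AuxGauss

theorem statement7 (N : ℕ) (c d : ℕ → ℝ) (Λ : ℝ → ℝ)
    (hΛ : ∀ θ, Λ θ = ∑ l ∈ Finset.range (N + 1),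
      (c l * Real.cos (l * θ) + d l * Real.sin (l * θ)))
    (μ : ℝ) (hμ : |Λ μ| ≠ 1) :
    (∀ᶠ σ in 𝓝[>] (0 : ℝ), 1 - (expBias Λ μ σ) ^ 2 ≠ 0) ∧
    Tendsto (fun σ : ℝ => (chiFun Λ μ σ) ^ 2 / (1 - (expBias Λ μ σ) ^ 2))
      (𝓝[>] (0 : ℝ)) (𝓝 ((deriv Λ μ) ^ 2 / (1 - (Λ μ) ^ 2))) := by
  have hfun : Λ = fun θ => ∑ l ∈ Finset.range (N + 1),
      (c l * Real.cos (l * θ) + d l * Real.sin (l * θ)) := funext hΛ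
  set f' : ℝ → ℝ := fun θ => ∑ l ∈ Finset.range (N + 1),
      ((l : ℝ) * (d l * Real.cos (l * θ) - c l * Real.sin (l * θ))) with hf'def
  -- derivative
  have hderiv : ∀ θ, HasDerivAt Λ (f' θ) θ := by
    rw [hfun]
    intro θ
    apply HasDerivAt.fun_sum
    intro l _
    have hc := (((hasDerivAt_id' θ).const_mul (l : ℝ)).cos.const_mul (c l))
    have hs := (((hasDerivAt_id' θ).const_mul (l : ℝ)).sin.const_mul (d l))
    have := hc.fun_add hs
    convert this using 1
    simp only [id_eq, id, mul_one]
    ring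
  have hcont : Continuous Λ := by
    rw [continuous_iff_continuousAt]; exact fun x => (hderiv x).continuousAt
  -- bounds
  set M : ℝ := ∑ l ∈ Finset.range (N + 1), (|c l| + |d l|) with hMdef
  have hM : ∀ θ, |Λ θ| ≤ M := by
    intro θ
    rw [hΛ θ]
    refine (Finset.abs_sum_le_sum_abs _ _).trans (Finset.sum_le_sum ?_)
    intro l _
    refine (abs_add_le _ _).trans ?_
    rw [abs_mul, abs_mul]
    exact add_le_add (mul_le_of_le_one_right (abs_nonneg _) (Real.abs_cos_le_one _))
      (mul_le_of_le_one_right (abs_nonneg _) (Real.abs_sin_le_one _))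
  set L : ℝ := ∑ l ∈ Finset.range (N + 1), ((l : ℝ) * (|d l| + |c l|)) with hLdef
  have hL : ∀ θ, |f' θ| ≤ L := by
    intro θ
    refine (Finset.abs_sum_le_sum_abs _ _).trans (Finset.sum_le_sum ?_)
    intro l _
    rw [abs_mul, Nat.abs_cast]
    refine mul_le_mul_of_nonneg_left ?_ (Nat.cast_nonneg l)
    refine (abs_sub _ _).trans ?_
    rw [abs_mul, abs_mul]
    exact add_le_add (mul_le_of_le_one_right (abs_nonneg _) (Real.abs_cos_le_one _))
      (mul_le_of_le_one_right (abs_nonneg _) (Real.abs_sin_le_one _))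
  have hlip : ∀ a b : ℝ, |Λ a - Λ b| ≤ L * |a - b| := by
    intro a b
    have := Convex.norm_image_sub_le_of_norm_hasDerivWithin_le
      (f := Λ) (f' := f') (s := Set.univ)
      (fun x _ => (hderiv x).hasDerivWithinAt)
      (fun x _ => by rw [Real.norm_eq_abs]; exact hL x)
      convex_univ (Set.mem_univ b) (Set.mem_univ a)
    simpa [Real.norm_eq_abs] using this
  -- substitution
  have hsqrt_pos : (0 : ℝ) < Real.sqrt (2 * Real.pi) :=
    Real.sqrt_pos.2 (by positivity)
  have hsub : ∀ (σ : ℝ), 0 < σ → ∀ g : ℝ → ℝ,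
      (∫ θ : ℝ, g θ) = σ * ∫ x : ℝ, g (μ + σ * x) := by
    intro σ hσ g
    have h1 : (∫ x : ℝ, g (μ + σ * x)) = |σ⁻¹| • ∫ y : ℝ, g (μ + y) :=
      MeasureTheory.Measure.integral_comp_mul_left (fun y => g (μ + y)) σ
    have h2 : (∫ y : ℝ, g (μ + y)) = ∫ y : ℝ, g y := by
      have := MeasureTheory.integral_add_right_eq_self (μ := volume) g μ
      simpa [add_comm] using this
    rw [h1, h2, abs_of_pos (inv_pos.2 hσ), smul_eq_mul]
    field_simp
  have hgauss_at : ∀ (σ : ℝ), 0 < σ → ∀ x : ℝ,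
      gaussDensity μ σ (μ + σ * x) = (Real.sqrt (2 * Real.pi))⁻¹ * σ⁻¹ *
        Real.exp (-x ^ 2 / 2) := by
    intro σ hσ x
    unfold gaussDensity
    rw [mul_inv]
    congr 1
    congr 1
    field_simp
    ring
  -- expBias formula
  have hB : ∀ (σ : ℝ), 0 < σ → expBias Λ μ σ =
      (Real.sqrt (2 * Real.pi))⁻¹ * ∫ x : ℝ, Real.exp (-x ^ 2 / 2) * Λ (μ + σ * x) := by
    intro σ hσ
    unfold expBias
    rw [hsub σ hσ (fun θ => gaussDensity μ σ θ * Λ θ)]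
    have heq : ∀ x : ℝ, gaussDensity μ σ (μ + σ * x) * Λ (μ + σ * x) =
        σ⁻¹ * ((Real.sqrt (2 * Real.pi))⁻¹ * (Real.exp (-x ^ 2 / 2) * Λ (μ + σ * x))) := by
      intro x; rw [hgauss_at σ hσ x]; ring
    simp only [heq]
    rw [MeasureTheory.integral_const_mul, MeasureTheory.integral_const_mul]
    rw [← mul_assoc, mul_inv_cancel₀ hσ.ne', one_mul]
  -- chiFun formula
  have hC : ∀ (σ : ℝ), 0 < σ → chiFun Λ μ σ =
      (Real.sqrt (2 * Real.pi))⁻¹ * (σ⁻¹ *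
        ∫ x : ℝ, x * Real.exp (-x ^ 2 / 2) * Λ (μ + σ * x)) := by
    intro σ hσ
    unfold chiFun
    rw [hsub σ hσ (fun θ => (θ - μ) * gaussDensity μ σ θ * Λ θ)]
    have heq : ∀ x : ℝ, (μ + σ * x - μ) * gaussDensity μ σ (μ + σ * x) * Λ (μ + σ * x) =
        (Real.sqrt (2 * Real.pi))⁻¹ * (x * Real.exp (-x ^ 2 / 2) * Λ (μ + σ * x)) := by
      intro x
      rw [hgauss_at σ hσ x]
      field_simp
      ring
    simp only [heq]
    rw [MeasureTheory.integral_const_mul]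
    field_simp
  -- integrability of the x-side integrands
  have hint1 : ∀ σ : ℝ, Integrable
      (fun x : ℝ => x * Real.exp (-x ^ 2 / 2) * Λ (μ + σ * x)) := by
    intro σ
    have hce : Continuous fun x : ℝ => Real.exp (-x ^ 2 / 2) :=
      Real.continuous_exp.comp ((continuous_pow 2).neg.div_const 2)
    have haff : Continuous fun x : ℝ => μ + σ * x :=
      continuous_const.add (continuous_const.mul continuous_id)
    refine Integrable.mono' (aux_integrable_mul.abs.const_mul M)
      ((((continuous_id.mul hce).mul (hcont.comp haff)).aestronglyMeasurable)) ?_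
    filter_upwards with x
    rw [Real.norm_eq_abs, abs_mul]
    calc |x * Real.exp (-x ^ 2 / 2)| * |Λ (μ + σ * x)|
        ≤ |x * Real.exp (-x ^ 2 / 2)| * M := by
          exact mul_le_mul_of_nonneg_left (hM _) (abs_nonneg _)
      _ = M * |x * Real.exp (-x ^ 2 / 2)| := by ring
  -- rewrite chi with difference quotient
  have hC2 : ∀ (σ : ℝ), 0 < σ → chiFun Λ μ σ =
      (Real.sqrt (2 * Real.pi))⁻¹ *
        ∫ x : ℝ, x * Real.exp (-x ^ 2 / 2) * ((Λ (μ + σ * x) - Λ μ) / σ) := by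
    intro σ hσ
    rw [hC σ hσ]
    congr 1
    have hsplit : (fun x : ℝ => x * Real.exp (-x ^ 2 / 2) * ((Λ (μ + σ * x) - Λ μ) / σ)) =
        fun x : ℝ => σ⁻¹ * (x * Real.exp (-x ^ 2 / 2) * Λ (μ + σ * x)) -
          (σ⁻¹ * Λ μ) * (x * Real.exp (-x ^ 2 / 2)) := by
      funext x
      field_simp
    rw [hsplit, MeasureTheory.integral_sub ((hint1 σ).const_mul _)
      (aux_integrable_mul.const_mul _), MeasureTheory.integral_const_mul,
      MeasureTheory.integral_const_mul, aux_integral_odd]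
    ring
  -- limit of μ + σ x
  have hinner : ∀ x : ℝ, Tendsto (fun σ : ℝ => μ + σ * x) (𝓝[>] (0:ℝ)) (𝓝 μ) := by
    intro x
    have : Tendsto (fun σ : ℝ => μ + σ * x) (𝓝 (0:ℝ)) (𝓝 (μ + 0 * x)) := by
      exact (tendsto_id.mul_const x).const_add μ
    simpa using this.mono_left nhdsWithin_le_nhds
  -- DCT for expBias
  have hBlim : Tendsto (fun σ : ℝ => ∫ x : ℝ, Real.exp (-x ^ 2 / 2) * Λ (μ + σ * x))
      (𝓝[>] (0:ℝ)) (𝓝 (Real.sqrt (2 * Real.pi) * Λ μ)) := by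
    have hval : ∫ x : ℝ, Real.exp (-x ^ 2 / 2) * Λ μ = Real.sqrt (2 * Real.pi) * Λ μ := by
      rw [MeasureTheory.integral_mul_const, aux_integral_exp]
    rw [← hval]
    apply tendsto_integral_filter_of_dominated_convergence
      (fun x : ℝ => M * Real.exp (-x ^ 2 / 2))
    · filter_upwards with σ
      have hce : Continuous fun x : ℝ => Real.exp (-x ^ 2 / 2) :=
        Real.continuous_exp.comp ((continuous_pow 2).neg.div_const 2)
      have haff : Continuous fun x : ℝ => μ + σ * x :=
        continuous_const.add (continuous_const.mul continuous_id)
      exact (hce.mul (hcont.comp haff)).aestronglyMeasurable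
    · filter_upwards with σ
      filter_upwards with x
      rw [Real.norm_eq_abs, abs_mul, abs_of_pos (Real.exp_pos _)]
      calc Real.exp (-x ^ 2 / 2) * |Λ (μ + σ * x)| ≤ Real.exp (-x ^ 2 / 2) * M :=
            mul_le_mul_of_nonneg_left (hM _) (Real.exp_pos _).le
        _ = M * Real.exp (-x ^ 2 / 2) := by ring
    · exact aux_integrable_exp.const_mul M
    · filter_upwards with x
      exact tendsto_const_nhds.mul ((hcont.tendsto μ).comp (hinner x))
  -- DCT for chi
  have hXlim : Tendsto
      (fun σ : ℝ => ∫ x : ℝ, x * Real.exp (-x ^ 2 / 2) * ((Λ (μ + σ * x) - Λ μ) / σ))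
      (𝓝[>] (0:ℝ)) (𝓝 (Real.sqrt (2 * Real.pi) * f' μ)) := by
    have hval : ∫ x : ℝ, x * Real.exp (-x ^ 2 / 2) * (f' μ * x)
        = Real.sqrt (2 * Real.pi) * f' μ := by
      have : (fun x : ℝ => x * Real.exp (-x ^ 2 / 2) * (f' μ * x)) =
          fun x : ℝ => (x ^ 2 * Real.exp (-x ^ 2 / 2)) * f' μ := by
        funext x; ring
      rw [this, MeasureTheory.integral_mul_const, aux_integral_sq]
    rw [← hval]
    apply tendsto_integral_filter_of_dominated_convergence
      (fun x : ℝ => L * (x ^ 2 * Real.exp (-x ^ 2 / 2)))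
    · filter_upwards [self_mem_nhdsWithin] with σ hσ
      have hce : Continuous fun x : ℝ => Real.exp (-x ^ 2 / 2) :=
        Real.continuous_exp.comp ((continuous_pow 2).neg.div_const 2)
      have haff : Continuous fun x : ℝ => μ + σ * x :=
        continuous_const.add (continuous_const.mul continuous_id)
      exact ((continuous_id.mul hce).mul
        (((hcont.comp haff).sub continuous_const).div_const σ)).aestronglyMeasurable
    · filter_upwards [self_mem_nhdsWithin] with σ hσ
      filter_upwards with x
      have hσ' : (0:ℝ) < σ := hσ
      rw [Real.norm_eq_abs, abs_mul, abs_mul, abs_div, abs_of_pos hσ',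
        abs_of_pos (Real.exp_pos _)]
      have hΔ : |Λ (μ + σ * x) - Λ μ| ≤ L * (σ * |x|) := by
        have := hlip (μ + σ * x) μ
        simpa [abs_mul, abs_of_pos hσ'] using this
      have hdiv : |Λ (μ + σ * x) - Λ μ| / σ ≤ L * |x| := by
        rw [div_le_iff₀ hσ']
        calc |Λ (μ + σ * x) - Λ μ| ≤ L * (σ * |x|) := hΔ
          _ = L * |x| * σ := by ring
      calc |x| * Real.exp (-x ^ 2 / 2) * (|Λ (μ + σ * x) - Λ μ| / σ)
          ≤ |x| * Real.exp (-x ^ 2 / 2) * (L * |x|) := by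
            exact mul_le_mul_of_nonneg_left hdiv (by positivity)
        _ = L * (x ^ 2 * Real.exp (-x ^ 2 / 2)) := by
            rw [show x ^ 2 = |x| * |x| from by rw [abs_mul_abs_self]; ring]; ring
    · exact aux_integrable_sq.const_mul L
    · filter_upwards with x
      have hg : HasDerivAt (fun σ : ℝ => Λ (μ + σ * x)) (f' μ * x) 0 := by
        have h1 : HasDerivAt (fun σ : ℝ => μ + σ * x) x 0 := by
          simpa using ((hasDerivAt_id (0:ℝ)).mul_const x).const_add μ
        have h2 := (hderiv (μ + 0 * x))
        have := HasDerivAt.comp (0:ℝ) (by simpa using h2) h1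
        exact this
      have hslope := hasDerivAt_iff_tendsto_slope.1 hg
      have hmono : (𝓝[>] (0:ℝ)) ≤ (𝓝[≠] (0:ℝ)) :=
        nhdsWithin_mono _ (fun y hy => ne_of_gt hy)
      have hslope' : Tendsto (fun σ : ℝ => (Λ (μ + σ * x) - Λ μ) / σ)
          (𝓝[>] (0:ℝ)) (𝓝 (f' μ * x)) := by
        refine ((hslope.mono_left hmono).congr' ?_)
        filter_upwards [self_mem_nhdsWithin] with σ hσ
        rw [slope_def_field]
        simp
      exact tendsto_const_nhds.mul hslope'
  -- assemble
  have hBtend : Tendsto (fun σ : ℝ => expBias Λ μ σ) (𝓝[>] (0:ℝ)) (𝓝 (Λ μ)) := by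
    have h := hBlim.const_mul ((Real.sqrt (2 * Real.pi))⁻¹)
    have hv : (Real.sqrt (2 * Real.pi))⁻¹ * (Real.sqrt (2 * Real.pi) * Λ μ) = Λ μ := by
      field_simp
    rw [hv] at h
    refine h.congr' ?_
    filter_upwards [self_mem_nhdsWithin] with σ hσ
    exact (hB σ hσ).symm
  have hXtend : Tendsto (fun σ : ℝ => chiFun Λ μ σ) (𝓝[>] (0:ℝ)) (𝓝 (f' μ)) := by
    have h := hXlim.const_mul ((Real.sqrt (2 * Real.pi))⁻¹)
    have hv : (Real.sqrt (2 * Real.pi))⁻¹ * (Real.sqrt (2 * Real.pi) * f' μ) = f' μ := by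
      field_simp
    rw [hv] at h
    refine h.congr' ?_
    filter_upwards [self_mem_nhdsWithin] with σ hσ
    exact (hC2 σ hσ).symm
  have hd : deriv Λ μ = f' μ := (hderiv μ).deriv
  have hne : (1 : ℝ) - (Λ μ) ^ 2 ≠ 0 := by
    intro h
    apply hμ
    have h1 : (Λ μ) ^ 2 = 1 := by linarith
    rw [← Real.sqrt_sq_eq_abs, h1, Real.sqrt_one]
  have hden : Tendsto (fun σ : ℝ => 1 - (expBias Λ μ σ) ^ 2) (𝓝[>] (0:ℝ))
      (𝓝 (1 - (Λ μ) ^ 2)) := tendsto_const_nhds.sub (hBtend.pow 2)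
  refine ⟨hden.eventually_ne hne, ?_⟩
  rw [hd]
  exact (hXtend.pow 2).div hden hne
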